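/- Let x₁ ≤ x₂ ≤ ⋯ ≤ x₆ be real numbers. For every partition of the index set {1, …, 6} into two 3-element subsets S and T, the sum of the distances within the two triples (x₁, x₂, x₃) and (x₄, x₅, x₆) is minimal: A(x₁,x₂,x₃) + A(x₄,x₅,x₆) ≤ A(x_S) + A(x_T), where A(x_S) denotes the distance within the triple indexed by S. -/

import Mathlib

set_option maxRecDepth 10000 in
/-- The distance within the tuple of values indexed by a finite index set `S`:
the sum of `|x j - x i|` over all pairs `i < j` in `S`. -/
def distWithin {m : ℕ} (x : Fin m → ℝ) (S : Finset (Fin m)) : ℝ :=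
  ∑ i ∈ S, ∑ j ∈ S.filter (fun j => i < j), |x j - x i|

lemma distWithin_eq_univ_sum {m : ℕ} (x : Fin m → ℝ) (S : Finset (Fin m)) :
    distWithin x S = ∑ i : Fin m, ∑ j : Fin m,
      if i ∈ S ∧ j ∈ S ∧ i < j then |x j - x i| else 0 := by
  rw [distWithin]
  rw [show (∑ i : Fin m, ∑ j : Fin m, if i ∈ S ∧ j ∈ S ∧ i < j then |x j - x i| else 0)
      = ∑ i : Fin m, if i ∈ S then (∑ j : Fin m, if j ∈ S ∧ i < j then |x j - x i| else 0) else 0 by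
    refine Finset.sum_congr rfl fun i _ => ?_
    by_cases h : i ∈ S <;> simp [h]]
  rw [Finset.sum_ite_mem, Finset.univ_inter]
  refine Finset.sum_congr rfl fun i _ => ?_
  rw [Finset.sum_filter]
  rw [show (∑ j : Fin m, if j ∈ S ∧ i < j then |x j - x i| else 0)
      = ∑ j : Fin m, if j ∈ S then (if i < j then |x j - x i| else 0) else 0 by
    refine Finset.sum_congr rfl fun j _ => ?_
    by_cases h : j ∈ S <;> simp [h]]
  rw [Finset.sum_ite_mem, Finset.univ_inter]

set_option maxRecDepth 10000 in
set_option maxHeartbeats 2000000 in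
/-- For a sorted 6-tuple, the partition into the triples `(x₁,x₂,x₃)` and
`(x₄,x₅,x₆)` minimizes the total distance within, over all partitions of the
six indices into two 3-element subsets. -/
theorem sorted_six_tuple_triple_matching_min_abs (x : Fin 6 → ℝ)
    (hx : Monotone x) (S T : Finset (Fin 6)) (hS : S.card = 3)
    (hT : T.card = 3) (hdisj : Disjoint S T) (hunion : S ∪ T = Finset.univ) :
    (|x 1 - x 0| + |x 2 - x 1| + |x 2 - x 0|) +
      (|x 4 - x 3| + |x 5 - x 4| + |x 5 - x 3|) ≤
    distWithin x S + distWithin x T := by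
  have hTc : T = Sᶜ := by
    rw [Finset.compl_eq_univ_sdiff, ← hunion, Finset.union_sdiff_cancel_left hdisj]
  subst hTc
  have h01 : x 0 ≤ x 1 := hx (by decide)
  have h12 : x 1 ≤ x 2 := hx (by decide)
  have h23 : x 2 ≤ x 3 := hx (by decide)
  have h34 : x 3 ≤ x 4 := hx (by decide)
  have h45 : x 4 ≤ x 5 := hx (by decide)
  have hab : ∀ i j : Fin 6, x i ≤ x j → |x j - x i| = x j - x i := by
    intro i j h; rw [abs_of_nonneg (by linarith)]
  have hS' : S ∈ Finset.univ.powersetCard 3 := by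
    simp [Finset.mem_powersetCard, hS]
  rw [distWithin_eq_univ_sum, distWithin_eq_univ_sum]
  fin_cases hS' <;>
  · simp only [Fin.sum_univ_six]
    norm_num (config := { decide := true })
      [hab 0 1 (by linarith), hab 1 2 (by linarith), hab 0 2 (by linarith),
      hab 3 4 (by linarith), hab 4 5 (by linarith), hab 3 5 (by linarith),
      hab 0 3 (by linarith), hab 0 4 (by linarith), hab 0 5 (by linarith),
      hab 1 3 (by linarith), hab 1 4 (by linarith), hab 1 5 (by linarith),
      hab 2 3 (by linarith), hab 2 4 (by linarith), hab 2 5 (by linarith)]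
    linarith
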